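/- Let (Ω, Σ, μ) be a finite measure space and suppose the utility functions ν_i° : S → ℝ, i = 1, …, n, are weakly* continuous and quasiconcave. Define the NTU market game V : I → 2^{ℝ^n} by V(S) = {x ∈ ℝ^n : there exists an S-allocation (f_1,…,f_n) with x_i ≤ ν_i°(f_i) for all i ∈ S}, where an S-allocation is an allocation with ∑_{i∈S} f_i = ∑_{i∈S} χ_{Ω_i} for a fixed initial partition (Ω_1,…,Ω_n). Then V is balanced: for every balanced family B of coalitions with balancing weights, ⋂_{S∈B} V(S) ⊆ V(I). -/

import Mathlib

open MeasureTheory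

/-- The set `S = {f ∈ L^∞ : 0 ≤ f ≤ 1 a.e.}`. -/
def Sset {Ω : Type*} [MeasurableSpace Ω] (μ : Measure Ω) : Set (Lp ℝ ⊤ μ) :=
  {f | ∀ᵐ x ∂μ, 0 ≤ f x ∧ f x ≤ 1}

/-- The weak* topology on `L^∞ = (L^1)^*`. -/
noncomputable def wst {Ω : Type*} [MeasurableSpace Ω] (μ : Measure Ω) :
    TopologicalSpace (Lp ℝ ⊤ μ) :=
  TopologicalSpace.induced (fun f => (fun g : Lp ℝ 1 μ => ∫ x, f x * g x ∂μ)) inferInstance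

/-- The set of allocations: `n`-tuples in `S^n` summing to `1` a.e. -/
def Alloc {Ω : Type*} [MeasurableSpace Ω] (μ : Measure Ω) (n : ℕ) :
    Set (Fin n → Lp ℝ ⊤ μ) :=
  {f | (∀ i, f i ∈ Sset μ) ∧ ∀ᵐ x ∂μ, (∑ i, f i x) = 1}

/-- `S`-allocations relative to the initial partition `W`: allocations with
`∑_{i ∈ S} f_i = ∑_{i ∈ S} χ_{W i}` (a.e.). -/
def SAlloc {Ω : Type*} [MeasurableSpace Ω] (μ : Measure Ω) (n : ℕ)
    (W : Fin n → Set Ω) (S : Finset (Fin n)) : Set (Fin n → Lp ℝ ⊤ μ) :=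
  {f | f ∈ Alloc μ n ∧
    ∀ᵐ x ∂μ, ∑ i ∈ S, f i x = ∑ i ∈ S, (W i).indicator (fun _ => (1 : ℝ)) x}

/-- The NTU market game `V`. -/
def Vgame {Ω : Type*} [MeasurableSpace Ω] (μ : Measure Ω) (n : ℕ)
    (W : Fin n → Set Ω) (ν : Fin n → Lp ℝ ⊤ μ → ℝ) (S : Finset (Fin n)) :
    Set (Fin n → ℝ) :=
  {x | ∃ f ∈ SAlloc μ n W S, ∀ i ∈ S, x i ≤ ν i (f i)}

lemma lp_coeFn_sum {Ω : Type*} [MeasurableSpace Ω] {μ : Measure Ω} {ι : Type*}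
    (s : Finset ι) (f : ι → Lp ℝ ⊤ μ) :
    ∀ᵐ x ∂μ, (∑ i ∈ s, f i : Lp ℝ ⊤ μ) x = ∑ i ∈ s, f i x := by
  classical
  induction s using Finset.induction with
  | empty =>
    filter_upwards [Lp.coeFn_zero ℝ ⊤ μ] with x hx
    simpa using hx
  | @insert a t hnot ih =>
      rw [Finset.sum_insert hnot]
      filter_upwards [Lp.coeFn_add (f a) (∑ i ∈ t, f i), ih] with x h1 h2
      rw [h1, Pi.add_apply, h2, Finset.sum_insert hnot]

lemma lp_coeFn_smul_sum {Ω : Type*} [MeasurableSpace Ω] {μ : Measure Ω} {ι : Type*}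
    (s : Finset ι) (c : ι → ℝ) (f : ι → Lp ℝ ⊤ μ) :
    ∀ᵐ x ∂μ, (∑ i ∈ s, c i • f i : Lp ℝ ⊤ μ) x = ∑ i ∈ s, c i * f i x := by
  have h1 := lp_coeFn_sum s (fun i => c i • f i)
  have h2 : ∀ᵐ x ∂μ, ∀ i ∈ (s : Set ι), (c i • f i : Lp ℝ ⊤ μ) x = c i * f i x :=
    (MeasureTheory.ae_ball_iff s.countable_toSet).mpr fun i _ => Lp.coeFn_smul (c i) (f i)
  filter_upwards [h1, h2] with x h1 h2
  rw [h1]; exact Finset.sum_congr rfl fun i hi => h2 i hi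

theorem stmt13 {Ω : Type*} [MeasurableSpace Ω] (μ : Measure Ω) [IsFiniteMeasure μ]
    {n : ℕ} (W : Fin n → Set Ω) (hWm : ∀ i, MeasurableSet (W i))
    (hWd : Pairwise (Function.onFun Disjoint W)) (hWu : (⋃ i, W i) = Set.univ)
    (ν : Fin n → Lp ℝ ⊤ μ → ℝ)
    -- each `ν_i` is weakly* continuous and quasiconcave on `S`
    (hνc : ∀ i, @ContinuousOn _ _ (wst μ) _ (ν i) (Sset μ))
    (hνq : ∀ i, QuasiconcaveOn ℝ (Sset μ) (ν i))
    -- a balanced family of coalitions with balancing weights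
    (B : Finset (Finset (Fin n))) (hBne : ∀ S ∈ B, S.Nonempty)
    (lam : Finset (Fin n) → ℝ) (hlam : ∀ S ∈ B, 0 ≤ lam S)
    (hbal : ∀ i : Fin n, ∑ S ∈ B.filter (fun S => i ∈ S), lam S = 1) :
    -- then `⋂_{S ∈ B} V(S) ⊆ V(I)`
    (⋂ S ∈ B, Vgame μ n W ν S) ⊆ Vgame μ n W ν Finset.univ := by
  classical
  intro x hx
  -- choose an S-allocation for each coalition in B
  have hch : ∀ S ∈ B, ∃ f ∈ SAlloc μ n W S, ∀ i ∈ S, x i ≤ ν i (f i) := by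
    intro S hS
    exact Set.mem_iInter₂.1 hx S hS
  choose! g hg1 hg2 using hch
  -- the candidate allocation
  set f : Fin n → Lp ℝ ⊤ μ :=
    fun i => ∑ S ∈ B.filter (fun S => i ∈ S), lam S • g S i with hf
  -- each f i lies in the convex set {y ∈ Sset | x i ≤ ν i y}
  have hfi : ∀ i, f i ∈ Sset μ ∧ x i ≤ ν i (f i) := by
    intro i
    have hconv := hνq i (x i)
    have := hconv.sum_mem (t := B.filter (fun S => i ∈ S)) (w := lam)
      (z := fun S => g S i)
      (fun S hS => hlam S (Finset.mem_filter.1 hS).1) (hbal i)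
      (fun S hS => by
        obtain ⟨hSB, hiS⟩ := Finset.mem_filter.1 hS
        exact ⟨(hg1 S hSB).1.1 i, hg2 S hSB i hiS⟩)
    exact this
  -- the a.e. pointwise description of f i
  have hfcoe : ∀ᵐ y ∂μ, ∀ i, f i y =
      ∑ S ∈ B.filter (fun S => i ∈ S), lam S * g S i y := by
    rw [MeasureTheory.ae_all_iff]
    intro i
    exact lp_coeFn_smul_sum _ _ _
  -- the a.e. S-allocation property of each g S
  have hgsum : ∀ᵐ y ∂μ, ∀ S ∈ (B : Set (Finset (Fin n))),
      ∑ i ∈ S, g S i y = ∑ i ∈ S, (W i).indicator (fun _ => (1 : ℝ)) y :=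
    (MeasureTheory.ae_ball_iff B.countable_toSet).mpr fun S hS => (hg1 S hS).2
  -- pointwise: the indicators of W sum to 1
  have hind : ∀ y : Ω, ∑ i, (W i).indicator (fun _ => (1 : ℝ)) y = 1 := by
    intro y
    obtain ⟨j, hj⟩ : ∃ j, y ∈ W j := by
      have : y ∈ ⋃ i, W i := hWu ▸ Set.mem_univ y
      exact Set.mem_iUnion.1 this
    rw [Finset.sum_eq_single j]
    · simp [Set.indicator_of_mem hj]
    · intro i _ hij
      have : y ∉ W i := fun hy => (hWd hij).le_bot ⟨hy, hj⟩
      simp [Set.indicator_of_notMem this]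
    · simp
  -- the key a.e. computation
  have hkey : ∀ᵐ y ∂μ, ∑ i, f i y = ∑ i, (W i).indicator (fun _ => (1 : ℝ)) y := by
    filter_upwards [hfcoe, hgsum] with y h1 h2
    calc ∑ i, f i y
        = ∑ i, ∑ S ∈ B.filter (fun S => i ∈ S), lam S * g S i y := by
          exact Finset.sum_congr rfl fun i _ => h1 i
      _ = ∑ i, ∑ S ∈ B, if i ∈ S then lam S * g S i y else 0 := by
          refine Finset.sum_congr rfl fun i _ => ?_
          rw [Finset.sum_filter]
      _ = ∑ S ∈ B, ∑ i, if i ∈ S then lam S * g S i y else 0 := Finset.sum_comm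
      _ = ∑ S ∈ B, lam S * ∑ i ∈ S, g S i y := by
          refine Finset.sum_congr rfl fun S _ => ?_
          rw [Finset.mul_sum, Finset.sum_ite_mem, Finset.univ_inter]
      _ = ∑ S ∈ B, lam S * ∑ i ∈ S, (W i).indicator (fun _ => (1 : ℝ)) y := by
          refine Finset.sum_congr rfl fun S hS => by rw [h2 S hS]
      _ = ∑ i, ∑ S ∈ B, if i ∈ S then lam S * (W i).indicator (fun _ => (1 : ℝ)) y else 0 := by
          rw [Finset.sum_comm]
          refine Finset.sum_congr rfl fun S _ => ?_
          symm; rw [Finset.sum_ite_mem, Finset.univ_inter, Finset.mul_sum]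
      _ = ∑ i, (∑ S ∈ B.filter (fun S => i ∈ S), lam S) * (W i).indicator (fun _ => (1 : ℝ)) y := by
          refine Finset.sum_congr rfl fun i _ => ?_
          rw [Finset.sum_mul, Finset.sum_filter]
      _ = ∑ i, (W i).indicator (fun _ => (1 : ℝ)) y := by
          refine Finset.sum_congr rfl fun i _ => by rw [hbal i, one_mul]
  refine ⟨f, ⟨⟨fun i => (hfi i).1, ?_⟩, ?_⟩, fun i _ => (hfi i).2⟩
  · filter_upwards [hkey] with y hy
    rw [hy, hind y]
  · exact hkey
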